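/- arXiv:2409.08142 — 3 statements merged into one kernel-verified Lean document; each statement's English description precedes it below -/
import Mathlib

section
/- Best-first search correctness on a finitely branching candidate tree: let T be a (possibly infinite-depth but finitely branching) rooted tree of candidates with a weight function w into a linear order such that w(child) ≥ w(parent) for every edge. If we repeatedly extract a minimum-weight node from a priority queue initialized with the root and insert its children upon extraction, then the sequence of extracted nodes has nondecreasing weights, and the k-th extracted node is a node of k-th smallest weight in T among all nodes (counted with multiplicity). -/
/-- Best-first search correctness on a candidate tree with edge-monotone
weights: if a priority queue initialized with the root repeatedly extracts a
minimum-weight node `e t` from the frontier `F t` and inserts its children,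
then the extracted weights are nondecreasing and every node is extracted
exactly once — hence the `k`-th extracted node has the `k`-th smallest weight
(with multiplicity) among all nodes. -/
theorem stmt_10 {V : Type*} [Fintype V] [DecidableEq V] {W : Type*} [LinearOrder W]
    (children : V → Finset V) (root : V) (w : V → W)
    (hmono : ∀ v : V, ∀ c ∈ children v, w v ≤ w c)
    (hrootnc : ∀ u : V, root ∉ children u)
    (huniq : ∀ u v x : V, x ∈ children u → x ∈ children v → u = v)
    (hirrefl : ∀ v : V, v ∉ children v)
    (hreach : ∀ v : V, Relation.ReflTransGen (fun a b => b ∈ children a) root v)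
    (N : ℕ) (hN : N = Fintype.card V)
    (F : ℕ → Finset V) (e : ℕ → V)
    (hF0 : F 0 = {root})
    (hstep : ∀ t, t < N → e t ∈ F t ∧ (∀ x ∈ F t, w (e t) ≤ w x) ∧
      F (t + 1) = (F t).erase (e t) ∪ children (e t)) :
    (∀ s t : ℕ, s ≤ t → t < N → w (e s) ≤ w (e t)) ∧
    (∀ v : V, ∃! t : ℕ, t < N ∧ e t = v) := by
  have hstep1 : ∀ t, t < N → e t ∈ F t := fun t ht => (hstep t ht).1
  -- Invariant describing the frontier
  have Inv : ∀ t, t ≤ N →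
      F t = ({root} ∪ (Finset.range t).biUnion (fun i => children (e i))) \
        (Finset.range t).image e := by
    intro t
    induction t using Nat.strong_induction_on with
    | _ t ih =>
      match t with
      | 0 => intro _; simp [hF0]
      | Nat.succ t =>
        intro ht1
        have ht : t < N := ht1
        have hInv := ih t (Nat.lt_succ_self t) (le_of_lt ht)
        obtain ⟨heF, hmin, hFstep⟩ := hstep t ht
        have hnotE : ∀ i, i < t → e i ≠ e t := by
          intro i hi hEq
          rw [hInv] at heF
          rw [Finset.mem_sdiff] at heF
          exact heF.2 (Finset.mem_image.mpr ⟨i, Finset.mem_range.mpr hi, hEq⟩)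
        have hchild : ∀ i, i < t + 1 → e i ∉ children (e t) := by
          intro i hi hc
          rcases Nat.lt_succ_iff_lt_or_eq.mp hi with hi | rfl
          · have hiN : i < N := hi.trans ht
            have hei := hstep1 i hiN
            rw [ih i (hi.trans (Nat.lt_succ_self t)) (le_of_lt hiN)] at hei
            rw [Finset.mem_sdiff, Finset.mem_union, Finset.mem_singleton] at hei
            rcases hei.1 with hr | hb
            · exact hrootnc (e t) (hr ▸ hc)
            · obtain ⟨j, hj, hjc⟩ := Finset.mem_biUnion.mp hb
              rw [Finset.mem_range] at hj
              have : e j = e t := huniq _ _ _ hjc hc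
              exact hnotE j (hj.trans hi) this
          · exact hirrefl _ hc
        rw [hFstep, hInv]
        ext a
        simp only [Finset.mem_union, Finset.mem_erase, Finset.mem_sdiff,
          Finset.mem_singleton, Finset.mem_biUnion, Finset.mem_range,
          Finset.mem_image, not_exists, not_and]
        constructor
        · rintro (⟨hne, ⟨hr | ⟨i, hi, hci⟩, hnex⟩⟩ | hca)
          · refine ⟨Or.inl hr, ?_⟩
            intro i hi
            rcases Nat.lt_succ_iff_lt_or_eq.mp hi with hi | rfl
            · exact hnex i hi
            · exact fun h => hne h.symm
          · refine ⟨Or.inr ⟨i, hi.trans (Nat.lt_succ_self t), hci⟩, ?_⟩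
            intro j hj
            rcases Nat.lt_succ_iff_lt_or_eq.mp hj with hj | rfl
            · exact hnex j hj
            · exact fun h => hne h.symm
          · refine ⟨Or.inr ⟨t, Nat.lt_succ_self t, hca⟩, ?_⟩
            intro j hj hEq
            exact hchild j hj (hEq ▸ hca)
        · rintro ⟨hr | ⟨i, hi, hci⟩, hnex⟩
          · left
            refine ⟨fun h => hnex t (Nat.lt_succ_self t) h.symm, Or.inl hr, ?_⟩
            intro i hi; exact hnex i (hi.trans (Nat.lt_succ_self t))
          · rcases Nat.lt_succ_iff_lt_or_eq.mp hi with hi | rfl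
            · left
              refine ⟨fun h => hnex t (Nat.lt_succ_self t) h.symm,
                Or.inr ⟨i, hi, hci⟩, ?_⟩
              intro j hj; exact hnex j (hj.trans (Nat.lt_succ_self t))
            · exact Or.inr hci
  -- injectivity of e on [0, N)
  have hinj : ∀ s t, s < t → t < N → e s ≠ e t := by
    intro s t hst htN hEq
    have het := hstep1 t htN
    rw [Inv t (le_of_lt htN), Finset.mem_sdiff] at het
    exact het.2 (Finset.mem_image.mpr ⟨s, Finset.mem_range.mpr hst, hEq⟩)
  have hinj' : ∀ s t, s < N → t < N → e s = e t → s = t := by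
    intro s t hs ht hEq
    rcases lt_trichotomy s t with h | h | h
    · exact absurd hEq (hinj s t h ht)
    · exact h
    · exact absurd hEq.symm (hinj t s h hs)
  -- surjectivity
  have hsurj : ∀ v : V, ∃ t, t < N ∧ e t = v := by
    have hcard : ((Finset.range N).image e).card = Fintype.card V := by
      rw [Finset.card_image_of_injOn, Finset.card_range, hN]
      intro s hs t ht
      exact hinj' s t (Finset.mem_range.mp hs) (Finset.mem_range.mp ht)
    have huniv : (Finset.range N).image e = Finset.univ :=
      Finset.eq_univ_of_card _ hcard
    intro v
    have : v ∈ (Finset.range N).image e := huniv ▸ Finset.mem_univ v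
    obtain ⟨t, ht, hEq⟩ := Finset.mem_image.mp this
    exact ⟨t, Finset.mem_range.mp ht, hEq⟩
  constructor
  · intro s t hst htN
    induction t, hst using Nat.le_induction with
    | base => exact le_refl _
    | succ t hst ih =>
      have htN' : t < N := lt_trans (Nat.lt_succ_self t) htN
      refine le_trans (ih htN') ?_
      obtain ⟨heF, hmin, hFstep⟩ := hstep t htN'
      have het1 := hstep1 (t + 1) htN
      rw [hFstep, Finset.mem_union] at het1
      rcases het1 with h | h
      · exact hmin _ (Finset.mem_of_mem_erase h)
      · exact hmono _ _ h
  · intro v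
    obtain ⟨t, htN, hEq⟩ := hsurj v
    refine ⟨t, ⟨htN, hEq⟩, ?_⟩
    rintro s ⟨hsN, rfl⟩
    exact hinj' s t hsN htN hEq.symm
end

section
/- Stack-based partition enumeration visits each element exactly once: in the candidate tree where the children of each node are obtained by either 'advancing' the last chosen tuple within its join group or 'extending' with the first tuple of the next group, every complete answer (maximal list of choices, one per group, in order) is generated by exactly one root-to-node path; equivalently, the map from complete answers to their generating sequences of advance/extend operations is a bijection. -/
/-- A complete answer is a choice of a (1-indexed) position in each join group,
bounded by the group sizes `m`. -/
def validAnswer (ℓ : ℕ) (m : Fin ℓ → ℕ) (j : Fin ℓ → ℕ) : Prop :=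
  ∀ i : Fin ℓ, 1 ≤ j i ∧ j i ≤ m i

/-- `stepRel a b` holds when candidate `b` is generated from the complete
answer `a` by advancing the position at some index `i` at or after the current
frontier of `a` (all positions after `i` in `a` equal `1`) and resetting all
later positions to `1`. -/
def stepRel (ℓ : ℕ) (a b : Fin ℓ → ℕ) : Prop :=
  ∃ i : Fin ℓ, (∀ k : Fin ℓ, k < i → b k = a k) ∧ b i = a i + 1 ∧
    (∀ k : Fin ℓ, i < k → b k = 1) ∧ (∀ k : Fin ℓ, i < k → a k = 1)

lemma exists_unique_pred (ℓ : ℕ) (m : Fin ℓ → ℕ) (hm : ∀ i, 1 ≤ m i)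
    (b : Fin ℓ → ℕ) (hb : validAnswer ℓ m b) (hne : b ≠ (fun _ => 1)) :
    ∃! a : Fin ℓ → ℕ, validAnswer ℓ m a ∧ stepRel ℓ a b := by
  have hex : ∃ i, 2 ≤ b i := by
    by_contra h
    push_neg at h
    exact hne (funext fun i => by have := (hb i).1; have := h i; omega)
  set s : Finset (Fin ℓ) := Finset.univ.filter (fun i => 2 ≤ b i) with hs
  have hsne : s.Nonempty := by
    obtain ⟨i, hi⟩ := hex
    exact ⟨i, by simp [hs, hi]⟩
  set i : Fin ℓ := s.max' hsne with hidef
  have hib : 2 ≤ b i := by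
    have := s.max'_mem hsne
    simpa [hs] using this
  have hmax : ∀ k, i < k → b k = 1 := by
    intro k hk
    by_contra h
    have h2 : 2 ≤ b k := by have := (hb k).1; omega
    have : k ≤ i := s.le_max' k (by simp [hs, h2])
    omega
  set a : Fin ℓ → ℕ := fun k => if k < i then b k else if k = i then b i - 1 else 1
    with ha
  have halt : ∀ k, k < i → a k = b k := fun k hk => if_pos hk
  have hai : a i = b i - 1 := by
    show (if i < i then b i else if i = i then b i - 1 else 1) = b i - 1
    simp
  have hagt : ∀ k, i < k → a k = 1 := by
    intro k hk
    show (if k < i then b k else if k = i then b i - 1 else 1) = 1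
    rw [if_neg (by omega), if_neg (by omega)]
  have hav : validAnswer ℓ m a := by
    intro k
    rcases lt_trichotomy k i with h | h | h
    · rw [halt k h]; exact hb k
    · rw [h, hai]; have := (hb i).2; omega
    · rw [hagt k h]; exact ⟨le_refl _, hm k⟩
  refine ⟨a, ⟨hav, ⟨i, fun k hk => (halt k hk).symm, by omega, hmax, hagt⟩⟩, ?_⟩
  rintro a' ⟨ha'v, i', h1, h2, h3, h4⟩
  have hii : i' = i := by
    have hbi' : 2 ≤ b i' := by have := (ha'v i').1; omega
    have hle : i' ≤ i := s.le_max' i' (by simp [hs, hbi'])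
    rcases eq_or_lt_of_le hle with h | h
    · exact h
    · exact absurd (h3 i h) (by omega)
  funext k
  rcases lt_trichotomy k i with h | h | h
  · rw [halt k h, h1 k (hii ▸ h)]
  · rw [h, hai]; rw [hii] at h2; omega
  · rw [hagt k h, h4 k (hii ▸ h)]

/-- The advance/extend candidate generation visits each complete answer exactly
once: every answer other than the all-first root has a unique generating
predecessor, and every answer is reachable from the root. -/
theorem stmt_11 (ℓ : ℕ) (m : Fin ℓ → ℕ) (hm : ∀ i, 1 ≤ m i) :
    (∀ b : Fin ℓ → ℕ, validAnswer ℓ m b → b ≠ (fun _ => 1) →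
      ∃! a : Fin ℓ → ℕ, validAnswer ℓ m a ∧ stepRel ℓ a b) ∧
    (∀ b : Fin ℓ → ℕ, validAnswer ℓ m b →
      Relation.ReflTransGen
        (fun x y => validAnswer ℓ m x ∧ validAnswer ℓ m y ∧ stepRel ℓ x y)
        (fun _ => 1) b) := by
  refine ⟨exists_unique_pred ℓ m hm, ?_⟩
  have H : ∀ n : ℕ, ∀ b : Fin ℓ → ℕ, (∑ k, b k) = n → validAnswer ℓ m b →
      Relation.ReflTransGen
        (fun x y => validAnswer ℓ m x ∧ validAnswer ℓ m y ∧ stepRel ℓ x y)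
        (fun _ => 1) b := by
    intro n
    induction n using Nat.strong_induction_on with
    | _ n ih =>
      intro b hn hb
      by_cases hne : b = (fun _ => 1)
      · subst hne; exact Relation.ReflTransGen.refl
      · obtain ⟨a, ⟨hav, hstep⟩, _⟩ := exists_unique_pred ℓ m hm b hb hne
        obtain ⟨i, h1, h2, h3, h4⟩ := hstep
        have hle : ∀ k, a k ≤ b k := by
          intro k
          rcases lt_trichotomy k i with h | h | h
          · rw [h1 k h]
          · subst h; omega
          · rw [h3 k h, h4 k h]
        have hlt : (∑ k, a k) < n := by
          rw [← hn]
          exact Finset.sum_lt_sum (fun k _ => hle k) ⟨i, Finset.mem_univ i, by omega⟩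
        exact (ih _ hlt a rfl hav).tail ⟨hav, hb, ⟨i, h1, h2, h3, h4⟩⟩
  exact fun b hb => H (∑ k, b k) b rfl hb
end

section
/- If a lexicographic variable order L is a restriction of a reverse alpha elimination order of an acyclic conjunctive query Q, then L contains no disruptive trio: there are no three variables x1, x2, x3 occurring in L in relative order x1 → x2 → x3 such that x1 and x2 do not co-occur in any atom of Q but x3 co-occurs with both x1 and x2. -/
/-- If a lexicographic order `L` is a restriction of the reverse of an alpha
elimination order `σ` of the query hypergraph `(V, E)`, then `L` contains no
disruptive trio.  Here `σ : Fin m → V` enumerates the variables in elimination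
order, `hsimp` states that each `σ i` is simplicial in the hypergraph induced
on the not-yet-eliminated variables `{σ j : i ≤ j}`, and `x1, x2, x3` are three
variables of `L` in relative order `x1 → x2 → x3`, i.e. appearing in reverse
elimination order (`i3 < i2 < i1`). -/
theorem stmt_13 {V : Type*} (E : Set (Set V)) (m : ℕ) (σ : Fin m → V)
    (hσ : Function.Bijective σ)
    (hsimp : ∀ i : Fin m, ∃ e ∈ E,
      ∀ y : V, (∃ jy : Fin m, i ≤ jy ∧ σ jy = y) →
        (∃ f ∈ E, σ i ∈ f ∧ y ∈ f) → y ∈ e)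
    (x1 x2 x3 : V) (i1 i2 i3 : Fin m)
    (hx1 : σ i1 = x1) (hx2 : σ i2 = x2) (hx3 : σ i3 = x3)
    (horder : i3 < i2 ∧ i2 < i1) :
    ¬ ((¬ ∃ e ∈ E, x1 ∈ e ∧ x2 ∈ e) ∧
       (∃ e ∈ E, x1 ∈ e ∧ x3 ∈ e) ∧
       (∃ e ∈ E, x2 ∈ e ∧ x3 ∈ e)) := by
  rintro ⟨hno, ⟨f1, hf1E, hx1f1, hx3f1⟩, ⟨f2, hf2E, hx2f2, hx3f2⟩⟩
  obtain ⟨e, heE, he⟩ := hsimp i3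
  have h1 : x1 ∈ e := he x1 ⟨i1, le_of_lt (lt_trans horder.1 horder.2), hx1⟩
    ⟨f1, hf1E, hx3 ▸ hx3f1, hx1f1⟩
  have h2 : x2 ∈ e := he x2 ⟨i2, le_of_lt horder.1, hx2⟩
    ⟨f2, hf2E, hx3 ▸ hx3f2, hx2f2⟩
  exact hno ⟨e, heE, h1, h2⟩
end
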